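/- In the basilica group B = ⟨a,b⟩ acting self-similarly on X = {x,y}, the abelianization B/[B,B] is isomorphic to Z² via an isomorphism sending the class of a to (1,0) and the class of b to (0,1). -/

import Mathlib

/-- The substitution `σ` on the free group on two generators `a, b`, replacing
`a ↦ b²` and `b ↦ a` (hence `a⁻¹ ↦ b⁻²`, `b⁻¹ ↦ a⁻¹`). -/
def basilicaSigma : Monoid.End (FreeGroup (Fin 2)) :=
  FreeGroup.lift (fun i => if i = 0 then FreeGroup.of 1 * FreeGroup.of 1 else FreeGroup.of 0)

/-- The relator `[a, b⁻¹ab] = a⁻¹(b⁻¹ab)⁻¹a(b⁻¹ab)`. -/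
def basilicaRelator : FreeGroup (Fin 2) :=
  (FreeGroup.of 0)⁻¹ * ((FreeGroup.of 1)⁻¹ * FreeGroup.of 0 * FreeGroup.of 1)⁻¹ *
    FreeGroup.of 0 * ((FreeGroup.of 1)⁻¹ * FreeGroup.of 0 * FreeGroup.of 1)

/-- The relations `σ^n([a, b⁻¹ab])`, `n ∈ ℕ`, of the Bartholdi–Virág presentation of
the basilica group. -/
def basilicaRels : Set (FreeGroup (Fin 2)) :=
  {x | ∃ n : ℕ, x = (basilicaSigma ^ n) basilicaRelator}

/-- The basilica group via its presentation
`B = ⟨a, b : σ^n([a, b⁻¹ab]) = e for all n⟩`. -/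
def BasilicaGroup : Type := PresentedGroup basilicaRels

noncomputable instance : Group BasilicaGroup := by unfold BasilicaGroup; infer_instance

section aux

def basF0 : Fin 2 → Multiplicative (ℤ × ℤ) :=
  fun i => if i = 0 then Multiplicative.ofAdd (1, 0) else Multiplicative.ofAdd (0, 1)

lemma comm_relator {G : Type*} [CommGroup G] (φ : FreeGroup (Fin 2) →* G) :
    φ basilicaRelator = 1 := by
  simp only [basilicaRelator, map_mul, map_inv]
  set A := φ (FreeGroup.of 0)
  set B := φ (FreeGroup.of 1)
  simp [mul_comm, mul_left_comm, mul_assoc]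

lemma basF0_kills : ∀ r ∈ basilicaRels, FreeGroup.lift basF0 r = 1 := by
  rintro r ⟨n, rfl⟩
  exact comm_relator ((FreeGroup.lift basF0).comp ((basilicaSigma ^ n : Monoid.End _) : FreeGroup (Fin 2) →* FreeGroup (Fin 2)))

noncomputable def basF : BasilicaGroup →* Multiplicative (ℤ × ℤ) :=
  PresentedGroup.toGroup basF0_kills

noncomputable def basf : Abelianization BasilicaGroup →* Multiplicative (ℤ × ℤ) :=
  Abelianization.lift basF

noncomputable def basA : Abelianization BasilicaGroup :=
  Abelianization.of (PresentedGroup.of (0 : Fin 2))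
noncomputable def basB : Abelianization BasilicaGroup :=
  Abelianization.of (PresentedGroup.of (1 : Fin 2))

noncomputable def basg : Multiplicative (ℤ × ℤ) →* Abelianization BasilicaGroup :=
  MonoidHom.mk' (fun p => basA ^ (p.toAdd.1) * basB ^ (p.toAdd.2))
    (by
      intro p q
      show basA ^ (p.toAdd.1 + q.toAdd.1) * basB ^ (p.toAdd.2 + q.toAdd.2) = _
      rw [zpow_add, zpow_add, mul_mul_mul_comm])

lemma basf_A : basf basA = Multiplicative.ofAdd (1, 0) := by
  rw [basf, basA]
  refine (Abelianization.lift_apply_of basF _).trans ?_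
  exact PresentedGroup.toGroup.of basF0_kills

lemma basf_B : basf basB = Multiplicative.ofAdd (0, 1) := by
  rw [basf, basB]
  refine (Abelianization.lift_apply_of basF _).trans ?_
  exact PresentedGroup.toGroup.of basF0_kills

/-- The abelianization of the basilica group `B = ⟨a,b⟩` is isomorphic to `ℤ²`, via an
isomorphism sending the class of `a` to `(1,0)` and the class of `b` to `(0,1)`. -/
theorem basilica_abelianization :
    ∃ φ : Abelianization BasilicaGroup ≃* Multiplicative (ℤ × ℤ),
      φ (Abelianization.of (PresentedGroup.of (0 : Fin 2))) = Multiplicative.ofAdd (1, 0) ∧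
      φ (Abelianization.of (PresentedGroup.of (1 : Fin 2))) = Multiplicative.ofAdd (0, 1) := by
  have left : ∀ x, basg (basf x) = x := by
    have : basg.comp basf = MonoidHom.id _ := by
      apply Abelianization.hom_ext
      apply MonoidHom.ext
      have h2 : ((MonoidHom.id (Abelianization BasilicaGroup)).comp Abelianization.of
          : BasilicaGroup →* Abelianization BasilicaGroup)
          = (basg.comp basf).comp Abelianization.of := by
        apply PresentedGroup.ext
        intro x
        fin_cases x
        · show _ = basg (basf basA)
          rw [basf_A]
          show _ = basA ^ (1 : ℤ) * basB ^ (0 : ℤ)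
          simp [basA]
          rfl
        · show _ = basg (basf basB)
          rw [basf_B]
          show _ = basA ^ (0 : ℤ) * basB ^ (1 : ℤ)
          simp [basB]
          rfl
      exact fun x => (congrFun (congrArg _ h2.symm) x)
    exact fun x => congrArg (fun h => h x) this |>.trans rfl
  have right : ∀ p, basf (basg p) = p := by
    intro p
    show basf (basA ^ (p.toAdd.1) * basB ^ (p.toAdd.2)) = p
    rw [map_mul, map_zpow, map_zpow, basf_A, basf_B]
    rw [← ofAdd_zsmul, ← ofAdd_zsmul, ← ofAdd_add]
    simp [Prod.ext_iff]
  exact ⟨{ toFun := basf, invFun := basg, left_inv := left, right_inv := right,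
           map_mul' := map_mul basf }, basf_A, basf_B⟩

end aux
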